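/- Fix k ≥ 1 and i ≥ 1. With c = k·f, the probability p(i) = C(f+c-i, f-1)/C(c+f, c) converges as f → ∞ to (1/(k+1))·(k/(k+1))^{i-1}, the probability mass of the geometric distribution Ge(1/(k+1)) at i. -/

import Mathlib

open Filter

/-- The natural-number cross-multiplication identity behind the limit. -/
lemma smlg_nat_key (m f i : ℕ) (hi : 1 ≤ i) (hf : 1 ≤ f) (hif : i ≤ f) (hm : f ≤ m) :
    Nat.choose (m + f - i) (f - 1) * (m + f).descFactorial i
      = Nat.choose (m + f) m * (f * m.descFactorial (i - 1)) := by
  have h1 : i ≤ m + f := by omega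
  have h2 : f - 1 ≤ m + f - i := by omega
  have e1 : Nat.choose (m + f - i) (f - 1) * (f - 1).factorial
      * ((m + f - i) - (f - 1)).factorial = (m + f - i).factorial :=
    Nat.choose_mul_factorial_mul_factorial h2
  have e2 : ((m + f) - i).factorial * (m + f).descFactorial i = (m + f).factorial :=
    Nat.factorial_mul_descFactorial h1
  have e3 : (m - (i - 1)).factorial * m.descFactorial (i - 1) = m.factorial :=
    Nat.factorial_mul_descFactorial (by omega)
  have e4 : Nat.choose (m + f) m * m.factorial * ((m + f) - m).factorial
      = (m + f).factorial := Nat.choose_mul_factorial_mul_factorial (by omega)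
  have hsub : (m + f - i) - (f - 1) = m - (i - 1) := by omega
  have hsub2 : (m + f) - m = f := by omega
  rw [hsub2] at e4
  have hfact : f * (f - 1).factorial = f.factorial := Nat.mul_factorial_pred (by omega)
  apply Nat.eq_of_mul_eq_mul_right
    (show 0 < (f - 1).factorial * (m - (i - 1)).factorial from Nat.mul_pos f.pred.factorial_pos
      (m - (i - 1)).factorial_pos)
  calc Nat.choose (m + f - i) (f - 1) * (m + f).descFactorial i
          * ((f - 1).factorial * (m - (i - 1)).factorial)
      = (Nat.choose (m + f - i) (f - 1) * (f - 1).factorial * (m - (i - 1)).factorial)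
          * (m + f).descFactorial i := by ring
    _ = (m + f - i).factorial * (m + f).descFactorial i := by rw [← hsub, e1]
    _ = (m + f).factorial := e2
    _ = Nat.choose (m + f) m * m.factorial * f.factorial := e4.symm
    _ = Nat.choose (m + f) m * ((m - (i - 1)).factorial * m.descFactorial (i - 1))
          * (f * (f - 1).factorial) := by rw [e3, hfact]
    _ = Nat.choose (m + f) m * (f * m.descFactorial (i - 1))
          * ((f - 1).factorial * (m - (i - 1)).factorial) := by ring

/-- Limit of a single linear-fraction factor. -/
lemma smlg_factor_tendsto (k a b : ℝ) (hk : 0 < k) :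
    Tendsto (fun x : ℝ => (k * x - a) / ((k + 1) * x - b)) atTop
      (nhds (k / (k + 1))) := by
  have hk1 : (k + 1) ≠ 0 := by positivity
  have hn : Tendsto (fun x : ℝ => k - a / x) atTop (nhds (k - 0)) :=
    tendsto_const_nhds.sub (Tendsto.div_atTop tendsto_const_nhds tendsto_id)
  have hd : Tendsto (fun x : ℝ => (k + 1) - b / x) atTop (nhds ((k + 1) - 0)) :=
    tendsto_const_nhds.sub (Tendsto.div_atTop tendsto_const_nhds tendsto_id)
  have h1 : Tendsto (fun x : ℝ => (k - a / x) / ((k + 1) - b / x)) atTop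
      (nhds (k / (k + 1))) := by
    simpa [Pi.div_def] using hn.div hd (by simpa using hk1)
  apply h1.congr'
  filter_upwards [eventually_ne_atTop (0 : ℝ)] with x hx
  have hnum : k * x - a = (k - a / x) * x := by field_simp
  have hden : (k + 1) * x - b = ((k + 1) - b / x) * x := by field_simp
  rw [hnum, hden, mul_div_mul_right _ _ hx]

/-- The real-variable limit. -/
lemma smlg_real_tendsto (k i : ℕ) (hk : 1 ≤ k) (hi : 1 ≤ i) :
    Tendsto (fun x : ℝ =>
        (x * ∏ j ∈ Finset.range (i - 1), ((k : ℝ) * x - (j : ℝ))) /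
          ∏ j ∈ Finset.range i, (((k : ℝ) + 1) * x - (j : ℝ))) atTop
      (nhds ((1 / ((k : ℝ) + 1)) * ((k : ℝ) / ((k : ℝ) + 1)) ^ (i - 1))) := by
  have hkR : (0 : ℝ) < (k : ℝ) := by exact_mod_cast hk
  have hk1 : ((k : ℝ) + 1) ≠ 0 := by positivity
  have h1 : Tendsto (fun x : ℝ => x / (((k : ℝ) + 1) * x)) atTop
      (nhds (1 / ((k : ℝ) + 1))) := by
    apply Tendsto.congr' _ tendsto_const_nhds
    filter_upwards [eventually_ne_atTop (0 : ℝ)] with x hx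
    rw [show x / (((k : ℝ) + 1) * x) = (1 * x) / (((k : ℝ) + 1) * x) by rw [one_mul],
      mul_div_mul_right _ _ hx]
  have h2 : Tendsto (fun x : ℝ => ∏ j ∈ Finset.range (i - 1),
        (((k : ℝ) * x - (j : ℝ)) / (((k : ℝ) + 1) * x - ((j : ℝ) + 1)))) atTop
      (nhds (∏ _j ∈ Finset.range (i - 1), (k : ℝ) / ((k : ℝ) + 1))) :=
    tendsto_finset_prod _ (fun j _ => smlg_factor_tendsto (k : ℝ) j (j + 1) hkR)
  have hL : Tendsto (fun x : ℝ => (x / (((k : ℝ) + 1) * x)) *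
        ∏ j ∈ Finset.range (i - 1),
          (((k : ℝ) * x - (j : ℝ)) / (((k : ℝ) + 1) * x - ((j : ℝ) + 1)))) atTop
      (nhds ((1 / ((k : ℝ) + 1)) * ((k : ℝ) / ((k : ℝ) + 1)) ^ (i - 1))) := by
    simpa [Finset.prod_const, Finset.card_range, div_pow] using h1.mul h2
  apply hL.congr
  intro x
  obtain ⟨i', rfl⟩ : ∃ i', i = i' + 1 := ⟨i - 1, by omega⟩
  simp only [Nat.add_sub_cancel]
  rw [Finset.prod_range_succ', Finset.prod_div_distrib, div_mul_div_comm]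
  congr 1
  rw [mul_comm]
  congr 1
  · exact Finset.prod_congr rfl (fun j _ => by push_cast; ring)
  · simp

/-- With `c = k·f`, the single-man request probability
`p(i) = C(f+c-i, f-1)/C(c+f, c)` converges as `f → ∞` to the geometric
probability `(1/(k+1))·(k/(k+1))^(i-1)`. -/
theorem single_man_limit_geometric (k i : ℕ) (hk : 1 ≤ k) (hi : 1 ≤ i) :
    Tendsto
      (fun f : ℕ =>
        (Nat.choose (f + k * f - i) (f - 1) : ℝ) / (Nat.choose (k * f + f) (k * f) : ℝ))
      atTop
      (nhds ((1 / ((k : ℝ) + 1)) * ((k : ℝ) / ((k : ℝ) + 1)) ^ (i - 1))) := by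
  have hF : Tendsto (fun f : ℕ =>
      (((f : ℝ)) * ∏ j ∈ Finset.range (i - 1), ((k : ℝ) * (f : ℝ) - (j : ℝ))) /
        ∏ j ∈ Finset.range i, (((k : ℝ) + 1) * (f : ℝ) - (j : ℝ))) atTop
      (nhds ((1 / ((k : ℝ) + 1)) * ((k : ℝ) / ((k : ℝ) + 1)) ^ (i - 1))) :=
    (smlg_real_tendsto k i hk hi).comp tendsto_natCast_atTop_atTop
  apply hF.congr'
  filter_upwards [eventually_ge_atTop i, eventually_ge_atTop 1] with f hif hf
  have hm : f ≤ k * f := Nat.le_mul_of_pos_left f hk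
  -- cast descFactorials to real products
  have hnum : (((k * f).descFactorial (i - 1) : ℕ) : ℝ)
      = ∏ j ∈ Finset.range (i - 1), ((k : ℝ) * (f : ℝ) - (j : ℝ)) := by
    rw [Nat.descFactorial_eq_prod_range, Nat.cast_prod]
    apply Finset.prod_congr rfl
    intro j hj
    have hj' : j ≤ k * f := by
      have := Finset.mem_range.mp hj; omega
    rw [Nat.cast_sub hj']
    push_cast
    ring
  have hden : (((k * f + f).descFactorial i : ℕ) : ℝ)
      = ∏ j ∈ Finset.range i, (((k : ℝ) + 1) * (f : ℝ) - (j : ℝ)) := by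
    rw [Nat.descFactorial_eq_prod_range, Nat.cast_prod]
    apply Finset.prod_congr rfl
    intro j hj
    have hj' : j ≤ k * f + f := by
      have := Finset.mem_range.mp hj; omega
    rw [Nat.cast_sub hj']
    push_cast
    ring
  have hkey := smlg_nat_key (k*f) f i hi hf hif hm
  have hcpos : (0 : ℝ) < (Nat.choose (k * f + f) (k * f) : ℝ) := by
    exact_mod_cast Nat.choose_pos (by omega : k * f ≤ k * f + f)
  have hdpos : (0 : ℝ) < (((k * f + f).descFactorial i : ℕ) : ℝ) := by
    rw [hden]
    apply Finset.prod_pos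
    intro j hj
    have hj' := Finset.mem_range.mp hj
    have hjf : (j : ℝ) < (f : ℝ) := by exact_mod_cast lt_of_lt_of_le hj' hif
    have hk1 : (1 : ℝ) ≤ (k : ℝ) := by exact_mod_cast hk
    have hf1 : (1 : ℝ) ≤ (f : ℝ) := by exact_mod_cast hf
    nlinarith
  have heq : (Nat.choose (f + k * f - i) (f - 1) : ℝ) /
        (Nat.choose (k * f + f) (k * f) : ℝ)
      = (((f : ℝ)) * (((k * f).descFactorial (i - 1) : ℕ) : ℝ)) /
        (((k * f + f).descFactorial i : ℕ) : ℝ) := by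
    rw [div_eq_div_iff hcpos.ne' hdpos.ne']
    rw [show f + k * f - i = k * f + f - i by omega]
    have h2 : (k * f + f - i).choose (f - 1) * (k * f + f).descFactorial i
        = f * (k * f).descFactorial (i - 1) * (k * f + f).choose (k * f) := by
      rw [hkey]; ring
    exact_mod_cast h2
  rw [heq, hnum, hden]
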